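/- arXiv:2303.11982 — 2 statements merged into one kernel-verified Lean document; each statement's English description precedes it below -/
import Mathlib

section
/- Consider the zero dynamics attack generator z[k+1] = (A - BCA/(CB)) z[k], a[k] = -(CA/(CB)) z[k], with z[0] ∈ ker C. If the attacked system evolves as x_a[k+1] = A x_a[k] + B(u[k] + a[k]) with x_a[0] = x[0] + z[0], and the nominal system as x[k+1] = A x[k] + B u[k], then x_a[k] - x[k] = z[k] for all k, and hence C x_a[k] = C x[k] for all k (the attack is perfectly stealthy in the output). -/
lemma vecMulVec_mulVec_eq {n : ℕ} (B w v : Fin n → ℝ) :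
    (Matrix.vecMulVec B w).mulVec v = (dotProduct w v) • B := by
  funext i
  simp [Matrix.mulVec, Matrix.vecMulVec_apply, dotProduct, Finset.mul_sum,
    Finset.sum_mul, mul_comm, mul_left_comm]

theorem stmt_3 (n : ℕ) (A : Matrix (Fin n) (Fin n) ℝ) (B C : Fin n → ℝ)
    (hCB : dotProduct C B ≠ 0)
    (u a : ℕ → ℝ) (z x xa : ℕ → Fin n → ℝ)
    (hz0 : dotProduct C (z 0) = 0)
    (hzrec : ∀ k, z (k + 1) =
      Matrix.mulVec
        (A - (dotProduct C B)⁻¹ • Matrix.vecMulVec B (Matrix.vecMul C A)) (z k))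
    (ha : ∀ k, a k = -(dotProduct C B)⁻¹ *
      dotProduct (Matrix.vecMul C A) (z k))
    (hx0 : xa 0 = x 0 + z 0)
    (hxrec : ∀ k, x (k + 1) = Matrix.mulVec A (x k) + u k • B)
    (hxarec : ∀ k, xa (k + 1) = Matrix.mulVec A (xa k) + (u k + a k) • B) :
    (∀ k, xa k - x k = z k) ∧
    (∀ k, dotProduct C (xa k) = dotProduct C (x k)) := by
  have hz : ∀ k, z (k + 1) = Matrix.mulVec A (z k)
      - ((dotProduct C B)⁻¹ * dotProduct (Matrix.vecMul C A) (z k)) • B := by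
    intro k
    rw [hzrec, Matrix.sub_mulVec, Matrix.smul_mulVec, vecMulVec_mulVec_eq, smul_smul]
  have hdiff : ∀ k, xa k - x k = z k := by
    intro k
    induction k with
    | zero => rw [hx0]; abel
    | succ k ih =>
      rw [hxarec, hxrec, hz, ha, ← ih, Matrix.mulVec_sub]
      module
  have hCz : ∀ k, dotProduct C (z k) = 0 := by
    intro k
    induction k with
    | zero => exact hz0
    | succ k ih =>
      rw [hz, dotProduct_sub, dotProduct_smul, Matrix.dotProduct_mulVec,
        smul_eq_mul]
      field_simp
      simp
  refine ⟨hdiff, fun k => ?_⟩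
  have := hCz k
  rw [← hdiff k, dotProduct_sub] at this
  linarith
end

section
/- Let A ∈ ℝ^{n×n}, B ∈ ℝ^n, C ∈ ℝ^{1×n} with CB ≠ 0. Consider the dynamic quantizer ξ[k+1] = A ξ[k] + B v[k] - B u[k], v[k] = q(-(CA/(CB)) ξ[k] + u[k]), with ξ[0] = 0, where |q(μ) - μ| ≤ d/2 for all μ. Then the outputs of x'[k+1] = A x'[k] + B v[k] and x[k+1] = A x[k] + B u[k] (both starting from the same initial state) satisfy |C x'[k] - C x[k]| ≤ (1/2)|CB| d for all k. -/
theorem stmt_6 (n : ℕ) (A : Matrix (Fin n) (Fin n) ℝ) (B C : Fin n → ℝ)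
    (hCB : dotProduct C B ≠ 0)
    (d : ℝ) (q : ℝ → ℝ) (hq : ∀ μ, |q μ - μ| ≤ d / 2)
    (u v : ℕ → ℝ) (ξ x x' : ℕ → Fin n → ℝ)
    (hξ0 : ξ 0 = 0)
    (hξ : ∀ k, ξ (k + 1) = Matrix.mulVec A (ξ k) + (v k - u k) • B)
    (hv : ∀ k, v k = q (-(dotProduct C B)⁻¹ *
      dotProduct (Matrix.vecMul C A) (ξ k) + u k))
    (hx0 : x' 0 = x 0)
    (hx : ∀ k, x (k + 1) = Matrix.mulVec A (x k) + u k • B)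
    (hx' : ∀ k, x' (k + 1) = Matrix.mulVec A (x' k) + v k • B) :
    ∀ k, |dotProduct C (x' k) - dotProduct C (x k)| ≤
      1 / 2 * |dotProduct C B| * d := by
  have hd : 0 ≤ d := by
    have := hq 0
    have h0 : (0:ℝ) ≤ |q 0 - 0| := abs_nonneg _
    linarith
  -- x' k - x k = ξ k
  have hdiff : ∀ k, x' k - x k = ξ k := by
    intro k
    induction k with
    | zero => rw [hx0, hξ0]; simp
    | succ k ih =>
      rw [hx' k, hx k, hξ k, ← ih]
      simp [Matrix.mulVec_sub, sub_smul]
      abel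
  intro k
  have key : dotProduct C (x' k) - dotProduct C (x k)
      = dotProduct C (ξ k) := by
    rw [← dotProduct_sub, hdiff k]
  rw [key]
  cases k with
  | zero => simp [hξ0, hd, abs_nonneg, mul_nonneg]
  | succ k =>
    set μ := -(dotProduct C B)⁻¹ *
      dotProduct (Matrix.vecMul C A) (ξ k) + u k with hμ
    have hCξ : dotProduct C (ξ (k+1)) = (q μ - μ) * dotProduct C B := by
      rw [hξ k, dotProduct_add, dotProduct_smul, hv k, ← hμ,
        Matrix.dotProduct_mulVec]
      field_simp [hμ]
      linear_combination (dotProduct C B) * hμ - (dotProduct (Matrix.vecMul C A) (ξ k)) * mul_inv_cancel₀ hCB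
    rw [hCξ, abs_mul]
    calc |q μ - μ| * |dotProduct C B| ≤ d / 2 * |dotProduct C B| := by
          exact mul_le_mul_of_nonneg_right (hq μ) (abs_nonneg _)
      _ = 1 / 2 * |dotProduct C B| * d := by ring
end
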